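/- For every positive integer N, the index of the congruence subgroup Γ₁(N) in SL(2,ℤ) equals N² ∏_{p | N} (1 − 1/p²), the product running over the prime divisors p of N; equivalently, [SL(2,ℤ) : Γ₁(N)] · ∏_{p | N} p² = N² · ∏_{p | N} (p² − 1). -/

import Mathlib

open Matrix MatrixGroups CongruenceSubgroup

namespace Gamma1Idx

/-! ### Coprime lifting over the integers -/

lemma int_lift (n : ℕ) (c d : ℤ) (h : ∃ x y m : ℤ, x * c + y * d = 1 + n * m) :
    ∃ c' d' : ℤ, IsCoprime c' d' ∧ (c' : ZMod n) = (c : ZMod n) ∧ (d' : ZMod n) = (d : ZMod n) := by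
  obtain ⟨x, y, m, hxy⟩ := h
  rcases Nat.eq_zero_or_pos n with hn | hn
  · subst hn
    push_cast at hxy
    refine ⟨c, d, ⟨x, y, by linarith⟩, rfl, rfl⟩
  set e : ℤ := if d = 0 then 1 else 0 with he
  have hd1ne : d + n * e ≠ 0 := by
    rcases eq_or_ne d 0 with h0 | h0
    · have he1 : e = 1 := by rw [he, if_pos h0]
      rw [he1, h0, mul_one, zero_add]
      have h1 : (0:ℤ) < (n:ℤ) := by exact_mod_cast hn
      exact h1.ne'
    · simpa [he, h0] using h0
  set d1 : ℤ := d + n * e with hd1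
  have hxy1 : x * c + y * d1 = 1 + n * (m + y * e) := by rw [hd1]; ring_nf; linarith [hxy]
  set m1 : ℤ := m + y * e with hm1
  set T : ℕ := ∏ p ∈ d1.natAbs.primeFactors.filter (fun p : ℕ => ¬ ((p : ℤ) ∣ c)), p with hT
  refine ⟨c + n * T, d1, ?_, ?_, ?_⟩
  · rw [Int.isCoprime_iff_gcd_eq_one, Nat.eq_one_iff_not_exists_prime_dvd]
    intro p hp hpdvd
    have hpc' : (p : ℤ) ∣ c + n * T :=
      (Int.natCast_dvd_natCast.mpr hpdvd).trans (Int.gcd_dvd_left _ _)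
    have hpd1 : (p : ℤ) ∣ d1 :=
      (Int.natCast_dvd_natCast.mpr hpdvd).trans (Int.gcd_dvd_right _ _)
    have hppz : Prime (p : ℤ) := Nat.prime_iff_prime_int.mp hp
    have hnot1 : ¬ (p : ℤ) ∣ 1 := fun h1 => hp.ne_one (by
      have := Int.eq_one_of_dvd_one (by positivity) h1
      exact_mod_cast this)
    by_cases hc : (p : ℤ) ∣ c
    · have hpnT : (p : ℤ) ∣ (n : ℤ) * T := (dvd_add_right hc).mp hpc'
      rcases hppz.dvd_mul.mp hpnT with hpn | hpT
      · apply hnot1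
        have : (1 : ℤ) = x * c + y * d1 - n * m1 := by linarith [hxy1]
        rw [this]
        exact dvd_sub (dvd_add (hc.mul_left x) (hpd1.mul_left y)) (hpn.mul_right m1)
      · have hpTn : p ∣ T := Int.natCast_dvd_natCast.mp hpT
        rw [hT] at hpTn
        obtain ⟨q, hq, hpq⟩ := (Prime.dvd_finset_prod_iff hp.prime _).mp hpTn
        obtain ⟨hqfac, hqc⟩ := Finset.mem_filter.mp hq
        have hqp : q.Prime := Nat.prime_of_mem_primeFactors hqfac
        have : p = q := (Nat.prime_dvd_prime_iff_eq hp hqp).mp hpq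
        exact hqc (this ▸ hc)
    · have hpfac : p ∈ d1.natAbs.primeFactors := by
        refine Nat.mem_primeFactors.mpr ⟨hp, ?_, fun h0 => hd1ne (Int.natAbs_eq_zero.mp h0)⟩
        have := Int.natAbs_dvd_natAbs.mpr hpd1
        simpa using this
      have hmem : p ∈ d1.natAbs.primeFactors.filter (fun p : ℕ => ¬ ((p : ℤ) ∣ c)) :=
        Finset.mem_filter.mpr ⟨hpfac, hc⟩
      have hpT : p ∣ T := hT ▸ Finset.dvd_prod_of_mem _ hmem
      have hpnT : (p : ℤ) ∣ (n : ℤ) * T := ((Int.natCast_dvd_natCast.mpr hpT).mul_left _)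
      exact hc (by simpa using hpc'.sub hpnT)
  · push_cast
    simp
  · rw [hd1]
    push_cast
    simp

/-! ### The set of unimodular vectors and its cardinality -/

def UniT (R : Type*) [CommRing R] : Set (Fin 2 → R) := {v | ∃ x y : R, x * v 0 + y * v 1 = 1}

variable {R S : Type*} [CommRing R] [CommRing S]

lemma uniT_congr (e : R ≃+* S) : Nat.card (UniT R) = Nat.card (UniT S) := by
  apply Nat.card_congr
  refine ⟨fun v => ⟨fun j => e (v.1 j), ?_⟩, fun v => ⟨fun j => e.symm (v.1 j), ?_⟩, ?_, ?_⟩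
  · obtain ⟨x, y, h⟩ := v.2
    exact ⟨e x, e y, by rw [← _root_.map_mul, ← _root_.map_mul, ← _root_.map_add, h, _root_.map_one]⟩
  · obtain ⟨x, y, h⟩ := v.2
    exact ⟨e.symm x, e.symm y, by rw [← _root_.map_mul, ← _root_.map_mul, ← _root_.map_add, h, _root_.map_one]⟩
  · intro v; ext j; simp
  · intro v; ext j; simp

lemma uniT_prod : Nat.card (UniT (R × S)) = Nat.card (UniT R) * Nat.card (UniT S) := by
  rw [← Nat.card_prod]
  apply Nat.card_congr
  refine ⟨fun v => (⟨fun j => (v.1 j).1, ?_⟩, ⟨fun j => (v.1 j).2, ?_⟩),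
    fun p => ⟨fun j => (p.1.1 j, p.2.1 j), ?_⟩, ?_, ?_⟩
  · obtain ⟨x, y, h⟩ := v.2
    exact ⟨x.1, y.1, by have := congrArg Prod.fst h; simpa using this⟩
  · obtain ⟨x, y, h⟩ := v.2
    exact ⟨x.2, y.2, by have := congrArg Prod.snd h; simpa using this⟩
  · obtain ⟨x1, y1, h1⟩ := p.1.2
    obtain ⟨x2, y2, h2⟩ := p.2.2
    exact ⟨(x1, x2), (y1, y2), by ext <;> simpa⟩
  · intro v; ext j <;> rfl
  · intro p; ext j <;> rfl

open scoped Classical in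
noncomputable def unitsEquiv (M : Type*) [Monoid M] : {x : M // IsUnit x} ≃ Mˣ where
  toFun x := x.2.unit
  invFun u := ⟨u, u.isUnit⟩
  left_inv x := Subtype.ext x.2.unit_spec
  right_inv u := Units.ext u.isUnit.unit_spec

open scoped Classical in
lemma card_or [Fintype R] :
    Nat.card {v : Fin 2 → R // IsUnit (v 0) ∨ IsUnit (v 1)} =
      Fintype.card R * Fintype.card R -
        (Fintype.card R - Fintype.card Rˣ) * (Fintype.card R - Fintype.card Rˣ) := by
  rw [Nat.card_eq_fintype_card]
  have e1 : {v : Fin 2 → R // IsUnit (v 0) ∨ IsUnit (v 1)} ≃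
      {z : R × R // IsUnit z.1 ∨ IsUnit z.2} :=
    (piFinTwoEquiv fun _ => R).subtypeEquiv (fun v => by simp [piFinTwoEquiv])
  have e2 : {z : R × R // IsUnit z.1 ∨ IsUnit z.2} ≃
      {z : R × R // ¬ (¬ IsUnit z.1 ∧ ¬ IsUnit z.2)} :=
    Equiv.subtypeEquivRight (fun z => by tauto)
  have e3 : {z : R × R // ¬ IsUnit z.1 ∧ ¬ IsUnit z.2} ≃
      {x : R // ¬ IsUnit x} × {y : R // ¬ IsUnit y} :=
    Equiv.subtypeProdEquivProd (p := fun x : R => ¬IsUnit x) (q := fun y : R => ¬IsUnit y)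
  rw [Fintype.card_congr (e1.trans e2), Fintype.card_subtype_compl,
    Fintype.card_congr e3, Fintype.card_prod, Fintype.card_prod,
    Fintype.card_subtype_compl, Fintype.card_congr (unitsEquiv R)]

lemma card_uniT_prime_pow {p k : ℕ} (hp : p.Prime) (hk : 0 < k) :
    Nat.card (UniT (ZMod (p ^ k))) = p ^ (2 * k) - p ^ (2 * k - 2) := by
  haveI : NeZero (p ^ k) := ⟨(pow_pos hp.pos k).ne'⟩
  have ea : k - 1 + 1 = k := by omega
  have eb : k - 1 + (k - 1) = 2 * k - 2 := by omega
  have ec : k + k = 2 * k := by omega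
  have hset : UniT (ZMod (p ^ k)) = {v | IsUnit (v 0) ∨ IsUnit (v 1)} := by
    ext v
    constructor
    · rintro ⟨x, y, h⟩
      by_contra hcon
      simp only [Set.mem_setOf_eq] at hcon
      push_neg at hcon
      obtain ⟨h0, h1⟩ := hcon
      have key : ∀ a : ZMod (p ^ k), ¬ IsUnit a → (p : ZMod (p ^ k)) ∣ a := by
        intro a ha
        have hval : ((a.val : ℕ) : ZMod (p ^ k)) = a := by
          rw [ZMod.natCast_val, ZMod.cast_id]
        have hnc : ¬ a.val.Coprime (p ^ k) := fun hc =>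
          ha (hval ▸ (ZMod.isUnit_iff_coprime _ _).mpr hc)
        have hpd : p ∣ a.val := by
          by_contra hnd
          exact hnc (Nat.Coprime.pow_right _
            (Nat.coprime_comm.mp ((Nat.Prime.coprime_iff_not_dvd hp).mpr hnd)))
        obtain ⟨t, ht⟩ := hpd
        exact ⟨(t : ZMod (p ^ k)), by rw [← hval, ht]; push_cast; ring⟩
      have hdvd1 : (p : ZMod (p ^ k)) ∣ 1 := by
        rw [← h]
        exact dvd_add ((key _ h0).mul_left x) ((key _ h1).mul_left y)
      have : IsUnit ((p : ℕ) : ZMod (p ^ k)) := isUnit_of_dvd_one hdvd1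
      rw [ZMod.isUnit_iff_coprime] at this
      exact hp.ne_one (Nat.Coprime.eq_one_of_dvd this (dvd_pow_self p hk.ne'))
    · rintro (h | h)
      · exact ⟨↑h.unit⁻¹, 0, by simp [h.val_inv_mul]⟩
      · exact ⟨0, ↑h.unit⁻¹, by simp [h.val_inv_mul]⟩
  have hcast : Nat.card (UniT (ZMod (p ^ k))) =
      Nat.card {v : Fin 2 → ZMod (p ^ k) // IsUnit (v 0) ∨ IsUnit (v 1)} := by
    rw [hset]; rfl
  rw [hcast, card_or, ZMod.card, ZMod.card_units_eq_totient, Nat.totient_prime_pow hp hk]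
  have h1 : p ^ k - p ^ (k - 1) * (p - 1) = p ^ (k - 1) := by
    have h0 : p ^ (k - 1) * (p - 1) + p ^ (k - 1) = p ^ k := by
      have : p ^ (k - 1) * (p - 1) + p ^ (k - 1) = p ^ (k - 1) * ((p - 1) + 1) := by ring
      rw [this, Nat.sub_add_cancel hp.one_lt.le, ← pow_succ, ea]
    rw [← h0, Nat.add_sub_cancel_left]
  rw [h1]
  have h2 : p ^ (k - 1) * p ^ (k - 1) = p ^ (2 * k - 2) := by rw [← pow_add, eb]
  have h3 : p ^ k * p ^ k = p ^ (2 * k) := by rw [← pow_add, ec]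
  rw [h2, h3]

lemma card_uniT_one : Nat.card (UniT (ZMod 1)) = 1 := by
  rw [Nat.card_eq_one_iff_unique]
  constructor
  · infer_instance
  · exact ⟨⟨fun _ => 0, 0, 0, Subsingleton.elim _ _⟩⟩

lemma card_uniT_mul {a b : ℕ} (h : Nat.Coprime a b) :
    Nat.card (UniT (ZMod (a * b))) = Nat.card (UniT (ZMod a)) * Nat.card (UniT (ZMod b)) := by
  rw [uniT_congr (ZMod.chineseRemainder h), uniT_prod]

lemma card_uniT (N : ℕ) (hN : 0 < N) :
    Nat.card (UniT (ZMod N)) * ∏ p ∈ N.primeFactors, p ^ 2 =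
      N ^ 2 * ∏ p ∈ N.primeFactors, (p ^ 2 - 1) := by
  induction N using Nat.recOnPosPrimePosCoprime with
  | prime_pow p n hp hn =>
    have hpn : p.Prime := hp
    rw [card_uniT_prime_pow hpn hn, Nat.primeFactors_prime_pow hn.ne' hpn,
      Finset.prod_singleton, Finset.prod_singleton]
    have hBC : p ^ (2 * n - 2) * p ^ 2 = p ^ (2 * n) := by
      rw [← pow_add]
      congr 1
      omega
    rw [tsub_mul, hBC, ← pow_mul]
    have h2n : n * 2 = 2 * n := by omega
    rw [h2n, Nat.mul_sub, mul_one]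
  | zero => exact absurd hN (lt_irrefl 0)
  | one => rw [card_uniT_one, Nat.primeFactors_one]; simp
  | coprime a b ha hb hab iha ihb =>
    have ha0 : 0 < a := by omega
    have hb0 : 0 < b := by omega
    rw [card_uniT_mul hab, hab.primeFactors_mul,
      Finset.prod_union (hab.disjoint_primeFactors), Finset.prod_union (hab.disjoint_primeFactors),
      mul_pow]
    calc Nat.card (UniT (ZMod a)) * Nat.card (UniT (ZMod b)) *
          ((∏ p ∈ a.primeFactors, p ^ 2) * ∏ p ∈ b.primeFactors, p ^ 2)
        = (Nat.card (UniT (ZMod a)) * ∏ p ∈ a.primeFactors, p ^ 2) *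
          (Nat.card (UniT (ZMod b)) * ∏ p ∈ b.primeFactors, p ^ 2) := by ring
      _ = (a ^ 2 * ∏ p ∈ a.primeFactors, (p ^ 2 - 1)) *
          (b ^ 2 * ∏ p ∈ b.primeFactors, (p ^ 2 - 1)) := by rw [iha ha0, ihb hb0]
      _ = a ^ 2 * b ^ 2 *
          ((∏ p ∈ a.primeFactors, (p ^ 2 - 1)) * ∏ p ∈ b.primeFactors, (p ^ 2 - 1)) := by ring

/-! ### The quotient `SL(2, ℤ) ⧸ Γ₁(N)` is in bijection with unimodular vectors -/

noncomputable def π (N : ℕ) : SL(2, ℤ) →* SL(2, ZMod N) :=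
  SpecialLinearGroup.map (Int.castRingHom (ZMod N))

def br {N : ℕ} (M : SL(2, ZMod N)) : Fin 2 → ZMod N := fun j => M.1 1 j

variable {N : ℕ}

lemma br_mul (M P : SL(2, ZMod N)) :
    br (M * P) = fun j => br M 0 * P.1 0 j + br M 1 * P.1 1 j := by
  funext j
  simp [br, SpecialLinearGroup.coe_mul, Matrix.mul_apply, Fin.sum_univ_two]

lemma π_apply (A : SL(2, ℤ)) (i j : Fin 2) : (π N A).1 i j = ((A.1 i j : ℤ) : ZMod N) := by
  simp [π]

lemma mem_Gamma1_iff (A : SL(2, ℤ)) :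
    A ∈ Gamma1 N ↔ br (π N A) = ![0, 1] := by
  rw [Gamma1_mem]
  constructor
  · rintro ⟨h1, h2, h3⟩
    funext j
    fin_cases j <;> simp_all [br, π_apply]
  · intro h
    have h0 : br (π N A) 0 = 0 := by rw [h]; simp
    have h1 : br (π N A) 1 = 1 := by rw [h]; simp
    simp only [br, π_apply] at h0 h1
    refine ⟨?_, by exact_mod_cast h1, by exact_mod_cast h0⟩
    have hdet : A.1 0 0 * A.1 1 1 - A.1 0 1 * A.1 1 0 = 1 := by
      have := A.2; rwa [Matrix.det_fin_two] at this
    have : ((A.1 0 0 * A.1 1 1 - A.1 0 1 * A.1 1 0 : ℤ) : ZMod N) = 1 := by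
      rw [hdet]; simp
    push_cast at this
    rw [h0, h1] at this
    simpa using this

noncomputable def f (N : ℕ) : SL(2, ℤ) → (Fin 2 → ZMod N) := fun g => br (π N g⁻¹)

lemma f_eq_iff (g h : SL(2, ℤ)) : f N g = f N h ↔ g⁻¹ * h ∈ Gamma1 N := by
  have key : ∀ u w : SL(2, ℤ), br (π N (u⁻¹ * w)) =
      fun j => f N u 0 * (π N w).1 0 j + f N u 1 * (π N w).1 1 j := by
    intro u w
    rw [_root_.map_mul, _root_.map_inv, br_mul]
    simp [f, π]
  constructor
  · intro hf
    rw [mem_Gamma1_iff, key g h, hf]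
    have := key h h
    rw [inv_mul_cancel, _root_.map_one] at this
    rw [this.symm]
    funext j
    fin_cases j <;> simp [br, SpecialLinearGroup.coe_one]
  · intro hm
    have e1 : (h⁻¹ : SL(2,ℤ)) = (g⁻¹ * h)⁻¹ * g⁻¹ := by group
    have this2 : f N h = br (π N ((g⁻¹*h)⁻¹) * π N g⁻¹) := by
      rw [f, e1, _root_.map_mul]
    rw [this2, br_mul]
    have hinv : br (π N ((g⁻¹*h)⁻¹)) = ![0, 1] :=
      (mem_Gamma1_iff _).1 (Subgroup.inv_mem _ hm)
    have h0 : br (π N ((g⁻¹*h)⁻¹)) 0 = 0 := by rw [hinv]; rfl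
    have h1 : br (π N ((g⁻¹*h)⁻¹)) 1 = 1 := by rw [hinv]; rfl
    rw [h0, h1]
    funext j
    simp [f, br]

lemma range_f : Set.range (f N) = UniT (ZMod N) := by
  ext v
  constructor
  · rintro ⟨g, rfl⟩
    refine ⟨-(π N g⁻¹).1 0 1, (π N g⁻¹).1 0 0, ?_⟩
    have hdet : (π N g⁻¹).1 0 0 * (π N g⁻¹).1 1 1 - (π N g⁻¹).1 0 1 * (π N g⁻¹).1 1 0 = 1 := by
      have := (π N g⁻¹).2; rwa [Matrix.det_fin_two] at this
    simp only [f, br]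
    ring_nf
    ring_nf at hdet
    linear_combination hdet
  · rintro ⟨x, y, hxy⟩
    have hlift : ∃ c d : ℤ, IsCoprime c d ∧ ((c : ZMod N) = v 0 ∧ (d : ZMod N) = v 1) := by
      obtain ⟨x0, hx0⟩ : ∃ x0 : ℤ, (x0 : ZMod N) = x := ⟨ZMod.cast x, ZMod.intCast_zmod_cast x⟩
      obtain ⟨y0, hy0⟩ : ∃ y0 : ℤ, (y0 : ZMod N) = y := ⟨ZMod.cast y, ZMod.intCast_zmod_cast y⟩
      obtain ⟨c0, hc0⟩ : ∃ c0 : ℤ, (c0 : ZMod N) = v 0 :=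
        ⟨ZMod.cast (v 0), ZMod.intCast_zmod_cast (v 0)⟩
      obtain ⟨d0, hd0⟩ : ∃ d0 : ℤ, (d0 : ZMod N) = v 1 :=
        ⟨ZMod.cast (v 1), ZMod.intCast_zmod_cast (v 1)⟩
      have key : ((x0 * c0 + y0 * d0 - 1 : ℤ) : ZMod N) = 0 := by
        push_cast
        rw [hx0, hy0, hc0, hd0, hxy]
        ring
      rw [ZMod.intCast_zmod_eq_zero_iff_dvd] at key
      obtain ⟨m, hm⟩ := key
      obtain ⟨c', d', hcop, hc', hd'⟩ := int_lift N c0 d0 ⟨x0, y0, m, by linarith⟩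
      exact ⟨c', d', hcop, by rw [hc', hc0], by rw [hd', hd0]⟩
    obtain ⟨c, d, ⟨u, w, huw⟩, hc, hd⟩ := hlift
    refine ⟨(⟨!![w, -u; c, d], ?_⟩ : SL(2,ℤ))⁻¹, ?_⟩
    · rw [Matrix.det_fin_two]; simp; linear_combination huw
    · have hM : ∀ M : SL(2,ℤ), f N M⁻¹ = br (π N M) := fun M => by rw [f, inv_inv]
      refine (hM _).trans ?_
      funext j
      fin_cases j <;> simp [br, π_apply, hc, hd] <;> exact (π_apply _ _ _).trans (by simp [hc, hd])

noncomputable def F (N : ℕ) : SL(2, ℤ) ⧸ Gamma1 N → UniT (ZMod N) :=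
  Quotient.lift (fun g => (⟨f N g, range_f ▸ Set.mem_range_self g⟩ : UniT (ZMod N)))
    (fun a b hab => Subtype.ext ((f_eq_iff a b).2 (QuotientGroup.leftRel_apply.mp hab)))

lemma F_bij : Function.Bijective (F N) := by
  constructor
  · intro a b
    induction a using Quotient.ind
    induction b using Quotient.ind
    intro hab
    apply Quotient.sound
    exact QuotientGroup.leftRel_apply.mpr ((f_eq_iff _ _).1 (congrArg Subtype.val hab))
  · rintro ⟨v, hv⟩
    rw [← range_f] at hv
    obtain ⟨g, rfl⟩ := hv
    exact ⟨⟦g⟧, rfl⟩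

lemma index_eq : (Gamma1 N).index = Nat.card (UniT (ZMod N)) := by
  rw [Subgroup.index, Nat.card_congr (Equiv.ofBijective _ (F_bij (N := N)))]

end Gamma1Idx

open Matrix MatrixGroups

/-- [SL(2,ℤ) : Γ₁(N)] = N² ∏_{p ∣ N} (1 − 1/p²), stated as
[SL(2,ℤ) : Γ₁(N)] · ∏_{p ∣ N} p² = N² · ∏_{p ∣ N} (p² − 1). -/
theorem gamma1_index (N : ℕ) (hN : 0 < N) :
    (CongruenceSubgroup.Gamma1 N).index * ∏ p ∈ N.primeFactors, p ^ 2 =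
      N ^ 2 * ∏ p ∈ N.primeFactors, (p ^ 2 - 1) := by
  rw [Gamma1Idx.index_eq]
  exact Gamma1Idx.card_uniT N hN
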